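/- Representation formula with three imaginary units: Let f = I(F) be a slice function on the circular set Ω_D ⊆ ℍⁿ. Then for all I, J, K ∈ 𝕊 with J ≠ K and all α, β ∈ ℝⁿ with α + iβ ∈ D, one has f(α + βI) = (I − K)·((J − K)⁻¹·f(α + βJ)) − (I − J)·((J − K)⁻¹·f(α + βK)), where all products and inverses are taken in the quaternions. -/

import Mathlib

/-- The sphere of quaternionic imaginary units. -/
def Sphere : Set (Quaternion ℝ) := {J | J * J = -1}

/-- The point `α + iβ ∈ ℂⁿ`. -/
noncomputable def cpt {n : ℕ} (α β : Fin n → ℝ) : Fin n → ℂ :=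
  fun t => (α t : ℂ) + (β t : ℂ) * Complex.I

/-- The point `α + βJ ∈ ℍⁿ`. -/
noncomputable def qpt {n : ℕ} (α β : Fin n → ℝ) (J : Quaternion ℝ) : Fin n → Quaternion ℝ :=
  fun t => (α t : Quaternion ℝ) + (β t : Quaternion ℝ) * J

/-- Componentwise complex conjugation on `ℂⁿ`. -/
def conjPt {n : ℕ} (z : Fin n → ℂ) : Fin n → ℂ := fun t => (starRingEnd ℂ) (z t)

/-- The key noncommutative ring identity behind the representation formula. -/
lemma key_identity (I J K A B : Quaternion ℝ) (hJ : J * J = -1) (hK : K * K = -1) :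
    (I - K) * ((J - K) * (A + J * B)) - (I - J) * ((J - K) * (A + K * B)) =
      (J - K) * (J - K) * A + I * ((J - K) * (J - K)) * B := by
  have eJ : ∀ x : Quaternion ℝ, J * (J * x) = -x := fun x => by
    rw [← mul_assoc, hJ, neg_one_mul]
  have eK : ∀ x : Quaternion ℝ, K * (K * x) = -x := fun x => by
    rw [← mul_assoc, hK, neg_one_mul]
  noncomm_ring [eJ, eK]

/-- Imaginary units are purely imaginary. -/
lemma sphere_re_zero (J : Quaternion ℝ) (h : J * J = -1) : J.re = 0 := by
  have h0 := congrArg QuaternionAlgebra.re h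
  have h1 := congrArg QuaternionAlgebra.imI h
  have h2 := congrArg QuaternionAlgebra.imJ h
  have h3 := congrArg QuaternionAlgebra.imK h
  simp [Quaternion.re_mul, Quaternion.imI_mul, Quaternion.imJ_mul, Quaternion.imK_mul,
    Quaternion.re_one, Quaternion.imI_one, Quaternion.imJ_one, Quaternion.imK_one]
    at h0 h1 h2 h3
  nlinarith [sq_nonneg J.re, sq_nonneg J.imI, sq_nonneg J.imJ, sq_nonneg J.imK]

/-- The algebraic core of the representation formula. -/
lemma rep_core (I J K A B : Quaternion ℝ) (hI : I ∈ Sphere) (hJ : J ∈ Sphere) (hK : K ∈ Sphere)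
    (hJK : J ≠ K) :
    A + I * B = (I - K) * ((J - K)⁻¹ * (A + J * B)) - (I - J) * ((J - K)⁻¹ * (A + K * B)) := by
  set u := J - K with hu_def
  have hu : u ≠ 0 := sub_ne_zero.mpr hJK
  have hure : u.re = 0 := by
    simp [hu_def, sphere_re_zero J hJ, sphere_re_zero K hK]
  have hstar : star u = -u := Quaternion.star_eq_neg.mpr hure
  have hnq : Quaternion.normSq u ≠ 0 := Quaternion.normSq_ne_zero.mpr hu
  have hinv : u⁻¹ = (-(Quaternion.normSq u)⁻¹) • u := by
    rw [Quaternion.inv_def, hstar, smul_neg, ← neg_smul]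
  have h1 : u * -u = ((Quaternion.normSq u : ℝ) : Quaternion ℝ) := by
    rw [← hstar]; exact Quaternion.self_mul_star u
  rw [mul_neg] at h1
  have huu : u * u = -((Quaternion.normSq u : ℝ) : Quaternion ℝ) := neg_eq_iff_eq_neg.mp h1
  set c : ℝ := -(Quaternion.normSq u)⁻¹ with hc
  rw [hinv]
  have expand : ∀ X Y : Quaternion ℝ, X * ((c • u) * Y) = c • (X * (u * Y)) := by
    intro X Y
    rw [smul_mul_assoc, Algebra.mul_smul_comm]
  rw [expand, expand, ← smul_sub, key_identity I J K A B hJ hK, huu]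
  simp only [mul_neg, neg_mul, Quaternion.coe_mul_eq_smul, Quaternion.mul_coe_eq_smul,
    smul_mul_assoc, ← neg_smul, ← smul_add, smul_smul]
  rw [show -(c * Quaternion.normSq u) = 1 from by rw [hc, neg_mul, neg_neg, inv_mul_cancel₀ hnq], one_smul]

/-- Representation formula with three imaginary units. -/
theorem representation_formula_three_units {n : ℕ} (D : Set (Fin n → ℂ)) (hD : IsOpen D)
    (hDconj : ∀ z ∈ D, conjPt z ∈ D)
    (F₁ F₂ : (Fin n → ℂ) → Quaternion ℝ)
    (hF₁ : ∀ z ∈ D, F₁ (conjPt z) = F₁ z)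
    (hF₂ : ∀ z ∈ D, F₂ (conjPt z) = - F₂ z)
    (f : (Fin n → Quaternion ℝ) → Quaternion ℝ)
    (hf : ∀ J ∈ Sphere, ∀ α β : Fin n → ℝ, cpt α β ∈ D →
      f (qpt α β J) = F₁ (cpt α β) + J * F₂ (cpt α β))
    (I J K : Quaternion ℝ) (hI : I ∈ Sphere) (hJ : J ∈ Sphere) (hK : K ∈ Sphere)
    (hJK : J ≠ K) (α β : Fin n → ℝ) (hz : cpt α β ∈ D) :
    f (qpt α β I) = (I - K) * ((J - K)⁻¹ * f (qpt α β J))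
      - (I - J) * ((J - K)⁻¹ * f (qpt α β K)) := by
  rw [hf I hI α β hz, hf J hJ α β hz, hf K hK α β hz]
  exact rep_core I J K (F₁ (cpt α β)) (F₂ (cpt α β)) hI hJ hK hJK
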